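/- Reduction to diagonal case: the inequality det(Σ_X + A^{1/2}Σ_Z A^{1/2})^{1/n} ≥ det(I−A)^{1/n} det(Σ_X)^{1/n} + det(A)^{1/n} det(Σ_X+Σ_Z)^{1/n} holds for all positive definite Σ_X and all commuting pairs (A, Σ_Z) with 0 ⪯ A ⪯ I if and only if it holds for all positive definite Σ_X with Σ_Z = I and A diagonal with entries in [0,1]. -/

import Mathlib

open Matrix Filter

/-- The square root of a positive semidefinite matrix, with the definition it had in the
older Mathlib (removed since). -/
noncomputable def Matrix.PosSemidef.sqrt {m : Type*} [Fintype m] [DecidableEq m]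
    {A : Matrix m m ℝ} (hA : A.PosSemidef) : Matrix m m ℝ :=
  hA.1.eigenvectorUnitary.1 * diagonal ((↑) ∘ (√·) ∘ hA.1.eigenvalues) *
    (star hA.1.eigenvectorUnitary : Matrix m m ℝ)

theorem Matrix.IsHermitian.star_mul_self_mul_eq_diagonal {m : Type*} [Fintype m] [DecidableEq m]
    {A : Matrix m m ℝ} (hA : A.IsHermitian) :
    (star (hA.eigenvectorUnitary : Matrix m m ℝ)) * A * (hA.eigenvectorUnitary : Matrix m m ℝ) =
      diagonal (RCLike.ofReal ∘ hA.eigenvalues) := by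
  have := hA.conjStarAlgAut_star_eigenvectorUnitary
  rwa [Unitary.conjStarAlgAut_star_apply] at this

theorem Matrix.PosSemidef.sqrt_mul_self {m : Type*} [Fintype m] [DecidableEq m]
    {A : Matrix m m ℝ} (hA : A.PosSemidef) : hA.sqrt * hA.sqrt = A := by
  have hU : star (hA.1.eigenvectorUnitary : Matrix m m ℝ) * hA.1.eigenvectorUnitary = 1 :=
    Unitary.coe_star_mul_self _
  have hs := hA.1.spectral_theorem
  rw [Unitary.conjStarAlgAut_apply] at hs
  unfold Matrix.PosSemidef.sqrt
  conv_rhs => rw [hs]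
  simp only [mul_assoc]
  rw [← mul_assoc (star (hA.1.eigenvectorUnitary : Matrix m m ℝ)), hU, one_mul,
    ← mul_assoc (diagonal _) (diagonal _), diagonal_mul_diagonal]
  congr 3
  funext i
  simp [Real.mul_self_sqrt (hA.eigenvalues_nonneg i)]

theorem Matrix.PosSemidef.posSemidef_sqrt {m : Type*} [Fintype m] [DecidableEq m]
    {A : Matrix m m ℝ} (hA : A.PosSemidef) : hA.sqrt.PosSemidef := by
  have hD : (diagonal ((↑) ∘ (√·) ∘ hA.1.eigenvalues) : Matrix m m ℝ).PosSemidef :=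
    posSemidef_diagonal_iff.mpr fun i => by simp [Real.sqrt_nonneg]
  have := hD.conjTranspose_mul_mul_same (star (hA.1.eigenvectorUnitary : Matrix m m ℝ))
  rw [← star_eq_conjTranspose, star_star] at this
  exact this

private lemma diag_comm_map' {n : ℕ} (X : Matrix (Fin n) (Fin n) ℝ) (d : Fin n → ℝ) (f : ℝ → ℝ)
    (h : X * diagonal d = diagonal d * X) :
    X * diagonal (fun i => f (d i)) = diagonal (fun i => f (d i)) * X := by
  ext i j
  have h' := congrFun (congrFun h i) j
  rw [mul_diagonal, diagonal_mul] at h' ⊢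
  rcases eq_or_ne (X i j) 0 with h0 | h0
  · simp [h0]
  · have hd : d j = d i := by
      have : X i j * d j = X i j * d i := by linarith [h']
      exact mul_left_cancel₀ h0 this
    rw [hd, mul_comm]

private lemma commute_sqrt' {n : ℕ} {B X : Matrix (Fin n) (Fin n) ℝ} (hB : B.PosSemidef)
    (h : X * B = B * X) : X * hB.sqrt = hB.sqrt * X := by
  set U : Matrix (Fin n) (Fin n) ℝ := (hB.1.eigenvectorUnitary : Matrix (Fin n) (Fin n) ℝ)
    with hUdef
  have hUU : star U * U = 1 := Unitary.coe_star_mul_self _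
  have hUU' : U * star U = 1 := Unitary.coe_mul_star_self _
  have hD : star U * B * U = diagonal (RCLike.ofReal ∘ hB.1.eigenvalues) :=
    hB.1.star_mul_self_mul_eq_diagonal
  set d : Fin n → ℝ := RCLike.ofReal ∘ hB.1.eigenvalues with hddef
  set Y := star U * X * U with hYdef
  have hYD : Y * diagonal d = diagonal d * Y := by
    calc Y * diagonal d = star U * X * U * (star U * B * U) := by rw [hD]
    _ = star U * (X * B) * U := by
        simp only [mul_assoc]; rw [← mul_assoc U (star U) _, hUU', one_mul]
    _ = star U * (B * X) * U := by rw [h]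
    _ = (star U * B * U) * (star U * X * U) := by
        simp only [mul_assoc]; rw [← mul_assoc U (star U) _, hUU', one_mul]
    _ = diagonal d * Y := by rw [hD]
  have key := diag_comm_map' Y d Real.sqrt hYD
  have hXUY : X = U * Y * star U := by
    rw [hYdef]; simp only [mul_assoc]; rw [hUU']
    rw [← mul_assoc U (star U) _, hUU', one_mul, mul_one]
  have hsq : hB.sqrt = U * diagonal (fun i => Real.sqrt (d i)) * star U := by
    rw [Matrix.PosSemidef.sqrt]
    congr 1
  calc X * hB.sqrt = U * Y * star U * (U * diagonal (fun i => Real.sqrt (d i)) * star U) := by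
        rw [← hXUY, ← hsq]
  _ = U * (Y * diagonal (fun i => Real.sqrt (d i))) * star U := by
        simp only [mul_assoc]; rw [← mul_assoc (star U) U _, hUU, one_mul]
  _ = U * (diagonal (fun i => Real.sqrt (d i)) * Y) * star U := by rw [key]
  _ = (U * diagonal (fun i => Real.sqrt (d i)) * star U) * (U * Y * star U) := by
        simp only [mul_assoc]; rw [← mul_assoc (star U) U _, hUU, one_mul]
  _ = hB.sqrt * X := by rw [← hXUY, ← hsq]

private lemma posdef_conj' {n : ℕ} {M B : Matrix (Fin n) (Fin n) ℝ} (hM : M.PosDef)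
    (hB : IsUnit B.det) : (Bᴴ * M * B).PosDef := by
  refine PosDef.of_dotProduct_mulVec_pos (isHermitian_conjTranspose_mul_mul B hM.1) fun x hx => ?_
  have hBx : B *ᵥ x ≠ 0 := by
    intro h0
    apply hx
    have := congrArg (fun v => B⁻¹ *ᵥ v) h0
    simpa [mulVec_mulVec, nonsing_inv_mul B hB] using this
  have h2 := hM.dotProduct_mulVec_pos hBx
  calc (0:ℝ) < star (B *ᵥ x) ⬝ᵥ (M *ᵥ (B *ᵥ x)) := h2
  _ = star x ⬝ᵥ ((Bᴴ * M * B) *ᵥ x) := by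
      simp [star_mulVec, dotProduct_mulVec, vecMul_vecMul, Matrix.mul_assoc]
      rw [vecMul_mulVec]

private lemma eig_le_one' {n : ℕ} {A : Matrix (Fin n) (Fin n) ℝ} (hA : A.PosSemidef)
    (hAI : (1 - A).PosSemidef) (i : Fin n) : hA.1.eigenvalues i ≤ 1 := by
  set v : Fin n → ℝ := ⇑(hA.1.eigenvectorBasis i) with hvdef
  have hv : A *ᵥ v = hA.1.eigenvalues i • v := hA.1.mulVec_eigenvectorBasis i
  have hnorm : v ⬝ᵥ v = 1 := by
    have h1 := hA.1.eigenvectorBasis.orthonormal.1 i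
    have h2 : (inner ℝ (hA.1.eigenvectorBasis i) (hA.1.eigenvectorBasis i) : ℝ) = v ⬝ᵥ v :=
      EuclideanSpace.inner_eq_star_dotProduct _ _
    rw [real_inner_self_eq_norm_sq, h1] at h2
    simpa using h2.symm
  have h0 := hAI.dotProduct_mulVec_nonneg v
  rw [sub_mulVec, one_mulVec, dotProduct_sub, hv, dotProduct_smul, smul_eq_mul] at h0
  simp only [star_trivial] at h0
  rw [hnorm] at h0
  linarith

private lemma main_posdefZ' {n : ℕ} (hn : 0 < n)
    (hd : ∀ (SX : Matrix (Fin n) (Fin n) ℝ) (hX : SX.PosDef) (a : Fin n → ℝ),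
        (∀ i, a i ∈ Set.Icc (0 : ℝ) 1) →
        (SX + diagonal a).det ^ ((n : ℝ)⁻¹) ≥
          (∏ i, (1 - a i)) ^ ((n : ℝ)⁻¹) * SX.det ^ ((n : ℝ)⁻¹) +
            (∏ i, a i) ^ ((n : ℝ)⁻¹) * (SX + 1).det ^ ((n : ℝ)⁻¹))
    {SX A SZ : Matrix (Fin n) (Fin n) ℝ} (hX : SX.PosDef) (hA : A.PosSemidef)
    (hZ : SZ.PosDef) (hAI : (1 - A).PosSemidef) (hcomm : A * SZ = SZ * A) :
    (SX + hA.sqrt * SZ * hA.sqrt).det ^ ((n : ℝ)⁻¹) ≥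
      (1 - A).det ^ ((n : ℝ)⁻¹) * SX.det ^ ((n : ℝ)⁻¹) +
        A.det ^ ((n : ℝ)⁻¹) * (SX + SZ).det ^ ((n : ℝ)⁻¹) := by
  set Q := hA.sqrt with hQdef
  set R := hZ.posSemidef.sqrt with hRdef
  have hRps : R.PosSemidef := hZ.posSemidef.posSemidef_sqrt
  have hRR : R * R = SZ := hZ.posSemidef.sqrt_mul_self
  have hQQ : Q * Q = A := hA.sqrt_mul_self
  have hSZdet : 0 < SZ.det := hZ.det_pos
  have hRdet0 : R.det * R.det = SZ.det := by rw [← det_mul, hRR]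
  have hRdetpos : 0 < R.det := by
    have hRdn : 0 ≤ R.det := by
      rw [hRps.1.det_eq_prod_eigenvalues]
      exact Finset.prod_nonneg fun i _ => hRps.eigenvalues_nonneg i
    rcases lt_or_eq_of_le hRdn with h | h
    · exact h
    · rw [← h] at hRdet0; simp at hRdet0; linarith
  have hRunit : IsUnit R.det := (ne_of_gt hRdetpos).isUnit
  have hZQ : SZ * Q = Q * SZ := commute_sqrt' hA hcomm.symm
  have hQR : Q * R = R * Q := commute_sqrt' hZ.posSemidef hZQ.symm
  have hkey : Q * SZ * Q = R * A * R := by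
    calc Q * SZ * Q = Q * R * (R * Q) := by rw [← hRR]; noncomm_ring
    _ = R * Q * (Q * R) := by rw [hQR]
    _ = R * A * R := by rw [← hQQ]; noncomm_ring
  have hRH : Rᴴ = R := hRps.1
  have hRiH : (R⁻¹)ᴴ = R⁻¹ := by rw [conjTranspose_nonsing_inv, hRH]
  have hRiR : R⁻¹ * R = 1 := nonsing_inv_mul R hRunit
  have hRRi : R * R⁻¹ = 1 := mul_nonsing_inv R hRunit
  set SX' := R⁻¹ * SX * R⁻¹ with hSX'def
  have hX' : SX'.PosDef := by
    have := posdef_conj' hX (isUnit_nonsing_inv_det R hRunit)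
    rwa [hRiH] at this
  have hRSX : R * SX' * R = SX := by
    calc R * (R⁻¹ * SX * R⁻¹) * R = (R * R⁻¹) * SX * (R⁻¹ * R) := by noncomm_ring
    _ = SX := by rw [hRRi, hRiR, one_mul, mul_one]
  set U : Matrix (Fin n) (Fin n) ℝ := (hA.1.eigenvectorUnitary : Matrix (Fin n) (Fin n) ℝ)
    with hUdef
  have hUU : star U * U = 1 := Unitary.coe_star_mul_self _
  have hUU' : U * star U = 1 := Unitary.coe_mul_star_self _
  set a := hA.1.eigenvalues with hadef
  have hAspec : star U * A * U = diagonal a := hA.1.star_mul_self_mul_eq_diagonal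
  have ha : ∀ i, a i ∈ Set.Icc (0 : ℝ) 1 := fun i =>
    ⟨hA.eigenvalues_nonneg i, eig_le_one' hA hAI i⟩
  have hUdet : IsUnit U.det := by
    apply IsUnit.of_mul_eq_one (star U).det
    rw [← det_mul, hUU']
    exact det_one
  have hdetU1 : (star U).det * U.det = 1 := by rw [← det_mul, hUU, det_one]
  set SX'' := star U * SX' * U with hSX''def
  have hX'' : SX''.PosDef := by
    have := posdef_conj' hX' hUdet
    rwa [← star_eq_conjTranspose] at this
  have hconjdet : ∀ M : Matrix (Fin n) (Fin n) ℝ, (star U * M * U).det = M.det := by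
    intro M
    rw [det_mul, det_mul]
    calc (star U).det * M.det * U.det = (star U).det * U.det * M.det := by ring
    _ = M.det := by rw [hdetU1, one_mul]
  have hconjdetR : ∀ M : Matrix (Fin n) (Fin n) ℝ, (R * M * R).det = SZ.det * M.det := by
    intro M
    rw [det_mul, det_mul]
    calc R.det * M.det * R.det = R.det * R.det * M.det := by ring
    _ = SZ.det * M.det := by rw [hRdet0]
  have d1 : (SX + Q * SZ * Q).det = SZ.det * (SX'' + diagonal a).det := by
    have e1 : SX + Q * SZ * Q = R * (SX' + A) * R := by
      rw [mul_add, add_mul, hRSX, hkey]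
    have e2 : star U * (SX' + A) * U = SX'' + diagonal a := by
      rw [mul_add, add_mul, hAspec]
    rw [e1, hconjdetR, ← hconjdet (SX' + A), e2]
  have d2 : SX.det = SZ.det * SX''.det := by
    rw [← hRSX, hconjdetR, ← hconjdet SX']
  have d3 : (SX + SZ).det = SZ.det * (SX'' + 1).det := by
    have e1 : SX + SZ = R * (SX' + 1) * R := by
      rw [mul_add, add_mul, hRSX, mul_one, hRR]
    have e2 : star U * (SX' + 1) * U = SX'' + 1 := by
      rw [mul_add, add_mul, mul_one, hUU]
    rw [e1, hconjdetR, ← hconjdet (SX' + 1), e2]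
  have d4 : A.det = ∏ i, a i := by
    have := hA.1.det_eq_prod_eigenvalues
    simpa using this
  have d5 : (1 - A).det = ∏ i, (1 - a i) := by
    have e2 : star U * (1 - A) * U = diagonal (fun i => 1 - a i) := by
      rw [mul_sub, sub_mul, hAspec, mul_one, hUU]
      rw [← diagonal_one, ← diagonal_sub]
    rw [← hconjdet (1 - A), e2, det_diagonal]
  have hDXpos : 0 < SX''.det := hX''.det_pos
  have hD1pos : 0 < (SX'' + diagonal a).det :=
    (hX''.add_posSemidef (PosSemidef.diagonal (fun i => (ha i).1))).det_pos
  have hD3pos : 0 < (SX'' + 1).det := (hX''.add_posSemidef PosSemidef.one).det_pos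
  have hP1 : 0 ≤ ∏ i, (1 - a i) := Finset.prod_nonneg fun i _ => by linarith [(ha i).2]
  have hP2 : 0 ≤ ∏ i, a i := Finset.prod_nonneg fun i _ => (ha i).1
  have hmain := hd SX'' hX'' a ha
  rw [ge_iff_le, d1, d2, d3, d4, d5]
  rw [Real.mul_rpow hSZdet.le hD1pos.le, Real.mul_rpow hSZdet.le hDXpos.le,
    Real.mul_rpow hSZdet.le hD3pos.le]
  set t := SZ.det ^ ((n : ℝ)⁻¹) with htdef
  have ht : 0 ≤ t := Real.rpow_nonneg hSZdet.le _
  calc (∏ i, (1 - a i)) ^ ((n:ℝ)⁻¹) * (t * SX''.det ^ ((n:ℝ)⁻¹)) +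
        (∏ i, a i) ^ ((n:ℝ)⁻¹) * (t * (SX'' + 1).det ^ ((n:ℝ)⁻¹))
      = t * ((∏ i, (1 - a i)) ^ ((n:ℝ)⁻¹) * SX''.det ^ ((n:ℝ)⁻¹) +
        (∏ i, a i) ^ ((n:ℝ)⁻¹) * (SX'' + 1).det ^ ((n:ℝ)⁻¹)) := by ring
  _ ≤ t * (SX'' + diagonal a).det ^ ((n:ℝ)⁻¹) := by
      apply mul_le_mul_of_nonneg_left _ ht
      exact hmain

private lemma main_general' {n : ℕ} (hn : 0 < n)
    (hd : ∀ (SX : Matrix (Fin n) (Fin n) ℝ) (hX : SX.PosDef) (a : Fin n → ℝ),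
        (∀ i, a i ∈ Set.Icc (0 : ℝ) 1) →
        (SX + diagonal a).det ^ ((n : ℝ)⁻¹) ≥
          (∏ i, (1 - a i)) ^ ((n : ℝ)⁻¹) * SX.det ^ ((n : ℝ)⁻¹) +
            (∏ i, a i) ^ ((n : ℝ)⁻¹) * (SX + 1).det ^ ((n : ℝ)⁻¹))
    {SX A SZ : Matrix (Fin n) (Fin n) ℝ} (hX : SX.PosDef) (hA : A.PosSemidef)
    (hZ : SZ.PosSemidef) (hAI : (1 - A).PosSemidef) (hcomm : A * SZ = SZ * A) :
    (SX + hA.sqrt * SZ * hA.sqrt).det ^ ((n : ℝ)⁻¹) ≥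
      (1 - A).det ^ ((n : ℝ)⁻¹) * SX.det ^ ((n : ℝ)⁻¹) +
        A.det ^ ((n : ℝ)⁻¹) * (SX + SZ).det ^ ((n : ℝ)⁻¹) := by
  have hQQ : hA.sqrt * hA.sqrt = A := hA.sqrt_mul_self
  have key : ∀ ε ∈ Set.Ioi (0:ℝ),
      (fun ε : ℝ => (1 - A).det ^ ((n:ℝ)⁻¹) * SX.det ^ ((n:ℝ)⁻¹) +
        A.det ^ ((n:ℝ)⁻¹) * ((SX + SZ) + ε • 1).det ^ ((n:ℝ)⁻¹)) ε ≤
      (fun ε : ℝ => ((SX + hA.sqrt * SZ * hA.sqrt) + ε • A).det ^ ((n:ℝ)⁻¹)) ε := by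
    intro ε hε
    have hε' : (0:ℝ) < ε := hε
    have hone : ((ε:ℝ) • (1 : Matrix (Fin n) (Fin n) ℝ)).PosDef := by
      rw [smul_one_eq_diagonal]
      exact Matrix.PosDef.diagonal fun i => hε'
    have hZε : (SZ + ε • 1).PosDef := Matrix.PosDef.posSemidef_add hZ hone
    have hcommε : A * (SZ + ε • 1) = (SZ + ε • 1) * A := by
      rw [mul_add, add_mul, hcomm, mul_smul_comm, smul_mul_assoc, mul_one, one_mul]
    have h := main_posdefZ' hn hd hX hA hZε hAI hcommε
    have e : hA.sqrt * (SZ + ε • 1) * hA.sqrt = (hA.sqrt * SZ * hA.sqrt) + ε • A := by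
      rw [mul_add, add_mul, mul_smul_comm, smul_mul_assoc, mul_one, hQQ]
    rw [e, ← add_assoc, ← add_assoc] at h
    exact h
  have hFc : Continuous fun ε : ℝ => ((SX + hA.sqrt * SZ * hA.sqrt) + ε • A).det ^ ((n:ℝ)⁻¹) := by
    apply Continuous.rpow_const
    · exact Continuous.matrix_det (continuous_const.add (continuous_id.smul continuous_const))
    · intro x; right; positivity
  have hGc : Continuous fun ε : ℝ => (1 - A).det ^ ((n:ℝ)⁻¹) * SX.det ^ ((n:ℝ)⁻¹) +
      A.det ^ ((n:ℝ)⁻¹) * ((SX + SZ) + ε • 1).det ^ ((n:ℝ)⁻¹) := by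
    apply continuous_const.add
    apply Continuous.mul continuous_const
    apply Continuous.rpow_const
    · exact Continuous.matrix_det (continuous_const.add (continuous_id.smul continuous_const))
    · intro x; right; positivity
  have hlim := le_of_tendsto_of_tendsto ((hGc.tendsto 0).mono_left nhdsWithin_le_nhds)
    ((hFc.tendsto 0).mono_left nhdsWithin_le_nhds)
    (eventually_nhdsWithin_of_forall key)
  simpa using hlim

theorem stmt_18 {n : ℕ} (hn : 0 < n) :
    (∀ (SX A SZ : Matrix (Fin n) (Fin n) ℝ) (hX : SX.PosDef)
        (hA : A.PosSemidef) (hZ : SZ.PosSemidef) (hAI : (1 - A).PosSemidef),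
        A * SZ = SZ * A →
        (SX + hA.sqrt * SZ * hA.sqrt).det ^ ((n : ℝ)⁻¹) ≥
          (1 - A).det ^ ((n : ℝ)⁻¹) * SX.det ^ ((n : ℝ)⁻¹) +
            A.det ^ ((n : ℝ)⁻¹) * (SX + SZ).det ^ ((n : ℝ)⁻¹)) ↔
    (∀ (SX : Matrix (Fin n) (Fin n) ℝ) (hX : SX.PosDef) (a : Fin n → ℝ),
        (∀ i, a i ∈ Set.Icc (0 : ℝ) 1) →
        (SX + diagonal a).det ^ ((n : ℝ)⁻¹) ≥
          (∏ i, (1 - a i)) ^ ((n : ℝ)⁻¹) * SX.det ^ ((n : ℝ)⁻¹) +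
            (∏ i, a i) ^ ((n : ℝ)⁻¹) * (SX + 1).det ^ ((n : ℝ)⁻¹)) := by
  constructor
  · intro h SX hX a ha
    have hA : (diagonal a).PosSemidef := PosSemidef.diagonal fun i => (ha i).1
    have hdiagsub : (1 : Matrix (Fin n) (Fin n) ℝ) - diagonal a = diagonal (fun i => 1 - a i) := by
      rw [← diagonal_one, ← diagonal_sub]
    have hAI : ((1 : Matrix (Fin n) (Fin n) ℝ) - diagonal a).PosSemidef := by
      rw [hdiagsub]
      exact PosSemidef.diagonal fun i => by simp only [Pi.zero_apply]; linarith [(ha i).2]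
    have hcomm : diagonal a * 1 = 1 * diagonal a := by rw [mul_one, one_mul]
    have h2 := h SX (diagonal a) 1 hX hA PosSemidef.one hAI hcomm
    rw [mul_one, hA.sqrt_mul_self, hdiagsub, det_diagonal, det_diagonal] at h2
    exact h2
  · intro hd SX A SZ hX hA hZ hAI hcomm
    exact main_general' hn hd hX hA hZ hAI hcomm
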